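/- Suppose α and β are equivalence relations on a finite set X, each having the same number k of blocks, with all blocks of α of the same cardinality n and all blocks of β of the same cardinality n. Then there exists an equivalence relation γ on X such that both (α, γ) and (β, γ) are factor pairs. -/

import Mathlib

open Finset

private lemma hall_rec (n : ℕ) : ∀ (X I J : Type*) [DecidableEq X] [DecidableEq I] [DecidableEq J]
    [Fintype I] [Fintype J] (S : Finset X) (a : X → I) (b : X → J),
    (∀ i, (S.filter fun x => a x = i).card = n) →
    (∀ j, (S.filter fun x => b x = j).card = n) →
    ∃ ℓ : X → ℕ, (∀ x ∈ S, ℓ x < n) ∧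
      (∀ x ∈ S, ∀ y ∈ S, a x = a y → ℓ x = ℓ y → x = y) ∧
      (∀ x ∈ S, ∀ y ∈ S, b x = b y → ℓ x = ℓ y → x = y) := by
  induction n with
  | zero =>
    intro X I J _ _ _ _ _ S a b ha hb
    have hS : ∀ x ∈ S, False := by
      intro x hx
      have h := ha (a x)
      have : x ∈ S.filter fun y => a y = a x := by simp [hx]
      rw [Finset.card_eq_zero] at h
      rw [h] at this
      exact absurd this (Finset.notMem_empty x)
    exact ⟨fun _ => 0, fun x hx => absurd (hS x hx) id,
      fun x hx => absurd (hS x hx) id, fun x hx => absurd (hS x hx) id⟩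
  | succ n ih =>
    intro X I J _ _ _ _ _ S a b ha hb
    -- card computations
    have hcardS : S.card = Fintype.card I * (n+1) := by
      rw [Finset.card_eq_sum_card_fiberwise (f := a) (fun x _ => Finset.mem_univ (a x))]
      simp [ha, Finset.sum_const]
    have hcardS' : S.card = Fintype.card J * (n+1) := by
      rw [Finset.card_eq_sum_card_fiberwise (f := b) (fun x _ => Finset.mem_univ (b x))]
      simp [hb, Finset.sum_const]
    have hIJ : Fintype.card I = Fintype.card J :=
      Nat.eq_of_mul_eq_mul_right (Nat.succ_pos n) (hcardS ▸ hcardS')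
    -- Hall
    set t : I → Finset J := fun i => (S.filter fun x => a x = i).image b with ht
    have hall : ∀ s : Finset I, s.card ≤ (s.biUnion t).card := by
      intro s
      have hdisj : ∀ i ∈ s, ∀ j ∈ s, i ≠ j →
          Disjoint (S.filter fun x => a x = i) (S.filter fun x => a x = j) := by
        intro i _ j _ hij
        simp only [Finset.disjoint_left, Finset.mem_filter]
        rintro x ⟨-, h1⟩ ⟨-, h2⟩
        exact hij (h1.symm.trans h2)
      have hsub : s.biUnion (fun i => S.filter fun x => a x = i) ⊆
          (s.biUnion t).biUnion (fun j => S.filter fun x => b x = j) := by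
        intro x hx
        simp only [Finset.mem_biUnion, Finset.mem_filter] at hx ⊢
        obtain ⟨i, hi, hxS, hax⟩ := hx
        exact ⟨b x, ⟨i, hi, Finset.mem_image.2
          ⟨x, Finset.mem_filter.2 ⟨hxS, hax⟩, rfl⟩⟩, hxS, rfl⟩
      have h1 : (s.biUnion fun i => S.filter fun x => a x = i).card = s.card * (n+1) := by
        rw [Finset.card_biUnion hdisj]
        simp [ha, Finset.sum_const]
      have h2 : ((s.biUnion t).biUnion fun j => S.filter fun x => b x = j).card ≤
          (s.biUnion t).card * (n+1) := by
        calc _ ≤ ∑ j ∈ s.biUnion t, (S.filter fun x => b x = j).card :=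
              Finset.card_biUnion_le
          _ = (s.biUnion t).card * (n+1) := by simp [hb, Finset.sum_const]
      have := (h1 ▸ Finset.card_le_card hsub).trans h2
      exact Nat.le_of_mul_le_mul_right this (Nat.succ_pos n)
    obtain ⟨f, hfinj, hft⟩ := (Finset.all_card_le_biUnion_card_iff_exists_injective t).1 hall
    -- choose representatives
    have hrep : ∀ i, ∃ x, x ∈ S ∧ a x = i ∧ b x = f i := by
      intro i
      obtain ⟨x, hx, hbx⟩ := Finset.mem_image.1 (hft i)
      obtain ⟨hxS, hax⟩ := Finset.mem_filter.1 hx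
      exact ⟨x, hxS, hax, hbx⟩
    choose g hgS hga hgb using hrep
    have hfsurj : Function.Surjective f :=
      (Finite.injective_iff_surjective_of_equiv (Fintype.equivOfCardEq hIJ)).1 hfinj
    -- the transversal
    set T : Finset X := Finset.image g Finset.univ with hT
    have hmemT : ∀ x, x ∈ T ↔ x = g (a x) := by
      intro x
      constructor
      · intro hx
        obtain ⟨i, -, rfl⟩ := Finset.mem_image.1 hx
        rw [hga]
      · intro hx
        rw [hx]
        exact Finset.mem_image.2 ⟨a x, Finset.mem_univ _, rfl⟩
    set S' := S \ T with hS'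
    have hfila : ∀ i, S'.filter (fun x => a x = i) = (S.filter fun x => a x = i).erase (g i) := by
      intro i
      ext x
      simp only [hS', Finset.mem_filter, Finset.mem_sdiff, Finset.mem_erase]
      constructor
      · rintro ⟨⟨hxS, hxT⟩, hax⟩
        refine ⟨fun h => hxT ((hmemT x).2 (by rw [hax]; exact h)), hxS, hax⟩
      · rintro ⟨hne, hxS, hax⟩
        refine ⟨⟨hxS, fun h => hne ?_⟩, hax⟩
        have := (hmemT x).1 h
        rwa [hax] at this
    have hfa : ∀ i, (S'.filter fun x => a x = i).card = n := by
      intro i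
      rw [hfila i, Finset.card_erase_of_mem (by simp [hgS i, hga i]), ha]; omega
    -- unique T element in each b-fiber
    choose finv hfinv using hfsurj
    have hTb : ∀ x ∈ T, ∀ j, b x = j → x = g (finv j) := by
      intro x hx j hbx
      obtain ⟨i, -, rfl⟩ := Finset.mem_image.1 hx
      have : f i = j := by rw [← hgb i, hbx]
      have : i = finv j := hfinj (by rw [this, hfinv])
      rw [this]
    have hfilb : ∀ j, S'.filter (fun x => b x = j) =
        (S.filter fun x => b x = j).erase (g (finv j)) := by
      intro j
      ext x
      simp only [hS', Finset.mem_filter, Finset.mem_sdiff, Finset.mem_erase]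
      constructor
      · rintro ⟨⟨hxS, hxT⟩, hbx⟩
        refine ⟨fun h => hxT ?_, hxS, hbx⟩
        · rw [h]; exact Finset.mem_image.2 ⟨finv j, Finset.mem_univ _, rfl⟩
      · rintro ⟨hne, hxS, hbx⟩
        refine ⟨⟨hxS, fun h => hne (hTb x h j hbx)⟩, hbx⟩
    have hfb : ∀ j, (S'.filter fun x => b x = j).card = n := by
      intro j
      rw [hfilb j, Finset.card_erase_of_mem (by simp [hgS, hgb, hfinv]), hb]; omega
    obtain ⟨ℓ, hℓlt, hℓa, hℓb⟩ := ih X I J S' a b hfa hfb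
    classical
    refine ⟨fun x => if x ∈ T then n else ℓ x, ?_, ?_, ?_⟩
    · intro x hx
      by_cases h : x ∈ T
      · simp [h]
      · simp only [h, if_neg, if_false]
        exact (hℓlt x (Finset.mem_sdiff.2 ⟨hx, h⟩)).trans (Nat.lt_succ_self n)
    · intro x hx y hy hax heq
      by_cases h1 : x ∈ T <;> by_cases h2 : y ∈ T <;> simp only [h1, h2, if_pos, if_neg, if_true, if_false] at heq
      · rw [(hmemT x).1 h1, (hmemT y).1 h2, hax]
      · exact absurd (heq ▸ hℓlt y (Finset.mem_sdiff.2 ⟨hy, h2⟩)) (lt_irrefl n)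
      · exact absurd (heq ▸ hℓlt x (Finset.mem_sdiff.2 ⟨hx, h1⟩)) (lt_irrefl n)
      · exact hℓa x (Finset.mem_sdiff.2 ⟨hx, h1⟩) y (Finset.mem_sdiff.2 ⟨hy, h2⟩) hax heq
    · intro x hx y hy hbx heq
      by_cases h1 : x ∈ T <;> by_cases h2 : y ∈ T <;> simp only [h1, h2, if_pos, if_neg, if_true, if_false] at heq
      · rw [hTb x h1 (b x) rfl, hTb y h2 (b y) rfl, hbx]
      · exact absurd (heq ▸ hℓlt y (Finset.mem_sdiff.2 ⟨hy, h2⟩)) (lt_irrefl n)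
      · exact absurd (heq ▸ hℓlt x (Finset.mem_sdiff.2 ⟨hx, h1⟩)) (lt_irrefl n)
      · exact hℓb x (Finset.mem_sdiff.2 ⟨hx, h1⟩) y (Finset.mem_sdiff.2 ⟨hy, h2⟩) hbx heq


lemma fiber_card_of_classes {X : Type*} [Fintype X] (σ : Setoid X)
    [DecidableEq (Quotient σ)] (n : ℕ) (h : ∀ c ∈ σ.classes, c.ncard = n)
    (i : Quotient σ) :
    (Finset.univ.filter fun x => Quotient.mk σ x = i).card = n := by
  classical
  induction i using Quotient.ind with
  | _ y =>
    have hc : {x | σ.r x y} ∈ σ.classes := ⟨y, rfl⟩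
    rw [← h _ hc, Set.ncard_eq_toFinset_card']
    congr 1
    ext x
    simp [Set.mem_toFinset, Quotient.eq]

lemma factor_aux {X : Type*} [Fintype X] (n : ℕ) (σ : Setoid X)
    [DecidableEq (Quotient σ)] (ℓ : X → ℕ) (hlt : ∀ x, ℓ x < n)
    (hfib : ∀ i : Quotient σ, (Finset.univ.filter fun x => Quotient.mk σ x = i).card = n)
    (hinj : ∀ x y, Quotient.mk σ x = Quotient.mk σ y → ℓ x = ℓ y → x = y) :
    Function.Bijective (fun x : X => (Quotient.mk σ x, Quotient.mk (Setoid.ker ℓ) x)) := by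
  classical
  have hker : ∀ x y : X, Quotient.mk (Setoid.ker ℓ) x = Quotient.mk (Setoid.ker ℓ) y ↔ ℓ x = ℓ y := by
    intro x y
    rw [Quotient.eq]
    exact Iff.rfl
  have hinj' : Function.Injective
      (fun x : X => (Quotient.mk σ x, Quotient.mk (Setoid.ker ℓ) x)) := by
    intro x y h
    simp only [Prod.mk.injEq] at h
    exact hinj x y h.1 ((hker x y).1 h.2)
  have hcX : Fintype.card X = Fintype.card (Quotient σ) * n := by
    rw [← Finset.card_univ, Finset.card_eq_sum_card_fiberwise
      (f := Quotient.mk σ) (fun x _ => Finset.mem_univ _)]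
    simp [hfib, Finset.sum_const, Finset.card_univ]
  have hq2 : Fintype.card (Quotient (Setoid.ker ℓ)) ≤ n := by
    have hlift : Function.Injective (Quotient.lift (fun x => (⟨ℓ x, hlt x⟩ : Fin n))
        (fun x y (h : ℓ x = ℓ y) => Fin.ext h) : Quotient (Setoid.ker ℓ) → Fin n) := by
      intro q1 q2
      induction q1 using Quotient.ind
      induction q2 using Quotient.ind
      intro h
      simp only [Quotient.lift_mk] at h
      exact (hker _ _).2 (congrArg Fin.val h)
    calc Fintype.card (Quotient (Setoid.ker ℓ)) ≤ Fintype.card (Fin n) :=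
          Fintype.card_le_of_injective _ hlift
      _ = n := Fintype.card_fin n
  have hcard : Fintype.card (Quotient σ × Quotient (Setoid.ker ℓ)) = Fintype.card X := by
    have h1 := Fintype.card_le_of_injective _ hinj'
    have h2 : Fintype.card (Quotient σ × Quotient (Setoid.ker ℓ)) ≤ Fintype.card X := by
      rw [Fintype.card_prod, hcX]
      exact Nat.mul_le_mul_left _ hq2
    omega
  exact (Fintype.bijective_iff_injective_and_card _).2 ⟨hinj', hcard.symm⟩

/-- A pair `(θ, φ)` of equivalence relations on `X` is a factor pair if the natural map
`X → X/θ × X/φ` is a bijection. -/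
def IsFactorPair {X : Type*} (θ φ : Setoid X) : Prop :=
  Function.Bijective (fun x : X => (Quotient.mk θ x, Quotient.mk φ x))

theorem stmt_4 {X : Type*} [Fintype X] (k n : ℕ) (α β : Setoid X)
    (hα1 : α.classes.ncard = k) (hα2 : ∀ c ∈ α.classes, c.ncard = n)
    (hβ1 : β.classes.ncard = k) (hβ2 : ∀ c ∈ β.classes, c.ncard = n) :
    ∃ γ : Setoid X, IsFactorPair α γ ∧ IsFactorPair β γ := by
  classical
  obtain ⟨ℓ, hlt, hainj, hbinj⟩ := hall_rec n X (Quotient α) (Quotient β) Finset.univ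
    (Quotient.mk α) (Quotient.mk β)
    (fiber_card_of_classes α n hα2) (fiber_card_of_classes β n hβ2)
  exact ⟨Setoid.ker ℓ,
    factor_aux n α ℓ (fun x => hlt x (Finset.mem_univ x))
      (fiber_card_of_classes α n hα2)
      (fun x y => hainj x (Finset.mem_univ x) y (Finset.mem_univ y)),
    factor_aux n β ℓ (fun x => hlt x (Finset.mem_univ x))
      (fiber_card_of_classes β n hβ2)
      (fun x y => hbinj x (Finset.mem_univ x) y (Finset.mem_univ y))⟩
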